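/- There is no probability measure ρ on the circle 𝕋 = ℝ/ℤ whose autocorrelation F_ρ equals the measure with density F(x) = 1 + cos(2πx) with respect to Haar measure, even though this measure F·Haar has total mass one, is nonnegative, has vanishing sine coefficients, and has nonnegative cosine coefficients. (Remark 3.4: the relaxed cone C strictly contains the set of autocorrelations of probabilities.) -/

import Mathlib

open MeasureTheory Real
open scoped ENNReal

theorem cos2pi_periodic : Function.Periodic (fun t : ℝ => Real.cos (2 * Real.pi * t)) 1 := by
  intro x; simp [mul_add, Real.cos_add_two_pi]

theorem sin2pi_periodic : Function.Periodic (fun t : ℝ => Real.sin (2 * Real.pi * t)) 1 := by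
  intro x; simp [mul_add, Real.sin_add_two_pi]

/-- The function `x ↦ cos (2π x)` on the circle `ℝ/ℤ`. -/
noncomputable def cosA : AddCircle (1 : ℝ) → ℝ := cos2pi_periodic.lift

/-- The function `x ↦ sin (2π x)` on the circle `ℝ/ℤ`. -/
noncomputable def sinA : AddCircle (1 : ℝ) → ℝ := sin2pi_periodic.lift

/-- The `d`-dimensional torus `𝕋^d = ℝ^d/ℤ^d`, with its Haar probability measure `volume`. -/
abbrev Torus (d : ℕ) := Fin d → AddCircle (1 : ℝ)

/-- `cos (2π k·x)` for `k ∈ ℤ^d` and `x ∈ 𝕋^d`. -/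
noncomputable def tcos {d : ℕ} (k : Fin d → ℤ) (x : Torus d) : ℝ := cosA (∑ i, k i • x i)

/-- `sin (2π k·x)` for `k ∈ ℤ^d` and `x ∈ 𝕋^d`. -/
noncomputable def tsin {d : ℕ} (k : Fin d → ℤ) (x : Torus d) : ℝ := sinA (∑ i, k i • x i)

/-- `cos (2π k x)` on the circle `𝕋 = ℝ/ℤ`. -/
noncomputable def cosC (k : ℤ) (x : AddCircle (1 : ℝ)) : ℝ := cosA (k • x)

/-- `sin (2π k x)` on the circle `𝕋 = ℝ/ℤ`. -/
noncomputable def sinC (k : ℤ) (x : AddCircle (1 : ℝ)) : ℝ := sinA (k • x)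

/-- The autocorrelation of a measure `ρ` on the circle `𝕋`: the pushforward of `ρ × ρ`
under `(x, y) ↦ x - y`. -/
noncomputable def autocorrC (ρ : Measure (AddCircle (1 : ℝ))) : Measure (AddCircle (1 : ℝ)) :=
  (ρ.prod ρ).map (fun p => p.1 - p.2)

/-- The measure on the circle with density `1 + cos(2πx)` with respect to Haar measure. -/
noncomputable def F3 : Measure (AddCircle (1 : ℝ)) :=
  volume.withDensity (fun x => ENNReal.ofReal (1 + cosC 1 x))
open MeasureTheory Real
open scoped ENNReal ComplexConjugate

local notation "𝕋" => AddCircle (1 : ℝ)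

instance : Fact ((0:ℝ) < 1) := ⟨one_pos⟩

lemma volume_eq_haar : (volume : Measure 𝕋) = AddCircle.haarAddCircle := by
  rw [AddCircle.volume_eq_smul_haarAddCircle]; simp

instance : IsProbabilityMeasure (volume : Measure 𝕋) := by
  rw [volume_eq_haar]; infer_instance

lemma my_integrable {E : Type*} [NormedAddCommGroup E] [SecondCountableTopology E]
    [MeasurableSpace E] [BorelSpace E] {f : 𝕋 → E} (hf : Continuous f)
    (μ : Measure 𝕋) [IsFiniteMeasure μ] : Integrable f μ :=
  (BoundedContinuousFunction.mkOfCompact ⟨f, hf⟩).integrable μ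

lemma integral_fourier (n : ℤ) :
    (∫ x : 𝕋, fourier n x ∂(volume : Measure 𝕋)) = if n = 0 then 1 else 0 := by
  rw [volume_eq_haar]
  split_ifs with h
  · subst h
    have : ⇑(@fourier (1:ℝ) 0) = (fun _ => 1 : 𝕋 → ℂ) := by ext1; exact fourier_zero
    rw [this, integral_const, probReal_univ, one_smul]
  · exact integral_eq_zero_of_add_right_eq_neg
      (fourier_add_half_inv_index h one_pos)

lemma fourier_eq (k : ℤ) (x : 𝕋) :
    (fourier k x : ℂ) = Complex.mk (cosC k x) (sinC k x) := by
  induction x using QuotientAddGroup.induction_on with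
  | H r =>
    have h1 : (k • ((r : 𝕋)) : 𝕋) = ((k * r : ℝ) : 𝕋) := by
      rw [← QuotientAddGroup.mk_zsmul]; norm_num [zsmul_eq_mul]
    have h2 : cosC k (r : 𝕋) = Real.cos (2 * π * (k * r)) := by
      rw [cosC, h1, cosA, Function.Periodic.lift_coe]
    have h3 : sinC k (r : 𝕋) = Real.sin (2 * π * (k * r)) := by
      rw [sinC, h1, sinA, Function.Periodic.lift_coe]
    rw [h2, h3, fourier_coe_apply]
    rw [show (2 * ↑π * Complex.I * ↑k * ↑r / ↑(1:ℝ) : ℂ)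
        = ((2 * π * (k * r) : ℝ) : ℂ) * Complex.I by push_cast; ring]
    rw [Complex.exp_mul_I, ← Complex.ofReal_cos, ← Complex.ofReal_sin,
      ← Complex.mk_eq_add_mul_I]

lemma cosC_eq (k : ℤ) (x : 𝕋) : cosC k x = (fourier k x).re := by rw [fourier_eq]
lemma sinC_eq (k : ℤ) (x : 𝕋) : sinC k x = (fourier k x).im := by rw [fourier_eq]

lemma cosC_cont (k : ℤ) : Continuous (cosC k) := by
  simp only [funext (cosC_eq k)]; exact Complex.continuous_re.comp (fourier k).continuous

lemma sinC_cont (k : ℤ) : Continuous (sinC k) := by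
  simp only [funext (sinC_eq k)]; exact Complex.continuous_im.comp (fourier k).continuous

lemma norm_fourier (n : ℤ) (x : 𝕋) : ‖(fourier n x : ℂ)‖ = 1 := by
  rw [fourier_apply]; exact Circle.norm_coe _

lemma dens_nonneg (x : 𝕋) : 0 ≤ 1 + cosC 1 x := by
  have h1 : |(fourier 1 x).re| ≤ 1 := by
    simpa [norm_fourier 1 x, Circle.norm_coe] using Complex.abs_re_le_norm (fourier 1 x)
  rw [cosC_eq]
  cases abs_le.1 h1 with | intro h _ => linarith

lemma integral_F3 {E : Type*} [NormedAddCommGroup E] [NormedSpace ℝ E] (f : 𝕋 → E) :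
    ∫ x, f x ∂F3 = ∫ x, (1 + cosC 1 x) • f x ∂(volume : Measure 𝕋) := by
  rw [F3]
  have hmeas : Measurable (fun x : 𝕋 => Real.toNNReal (1 + cosC 1 x)) :=
    (continuous_real_toNNReal.comp (continuous_const.add (cosC_cont 1))).measurable
  have h1 : (fun x : 𝕋 => ENNReal.ofReal (1 + cosC 1 x))
      = fun x : 𝕋 => (((1 + cosC 1 x).toNNReal) : ℝ≥0∞) := by
    ext x; simp [ENNReal.ofReal]
  rw [h1, integral_withDensity_eq_integral_smul hmeas f]
  refine integral_congr_ae (Filter.Eventually.of_forall fun x => ?_)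
  show (1 + cosC 1 x).toNNReal • f x = _
  rw [NNReal.smul_def, Real.coe_toNNReal _ (dens_nonneg x)]

lemma coeff_F3 (n : ℤ) : (∫ x, fourier n x ∂F3)
    = (if n = 0 then 1 else 0) + (if n = 1 then 1/2 else 0)
      + (if n = -1 then (1:ℂ)/2 else 0) := by
  rw [integral_F3]
  have hpt : ∀ x : 𝕋, (1 + cosC 1 x) • (fourier n x : ℂ)
      = fourier n x + (1/2 : ℂ) * fourier (n+1) x + (1/2 : ℂ) * fourier (n-1) x := by
    intro x
    have hcos : ((cosC 1 x : ℝ) : ℂ) = (fourier 1 x + fourier (-1) x) / 2 := by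
      rw [cosC_eq]
      rw [show (fourier (-1) x : ℂ) = starRingEnd ℂ (fourier 1 x) from fourier_neg]
      rw [Complex.add_conj]
      push_cast; ring
    have h1 : (fourier (n+1) x : ℂ) = fourier n x * fourier 1 x := fourier_add
    have h2 : (fourier (n-1) x : ℂ) = fourier n x * fourier (-1) x := by
      rw [show n - 1 = n + (-1) by ring]; exact fourier_add
    rw [Complex.real_smul, h1, h2]
    push_cast [hcos]
    ring
  simp only [hpt]
  have i1 : Integrable (fun x : 𝕋 => (fourier n x : ℂ)) volume :=
    my_integrable (fourier n).continuous _
  have i2 : Integrable (fun x : 𝕋 => (1/2 : ℂ) * fourier (n+1) x) volume :=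
    (my_integrable (fourier (n+1)).continuous _).const_mul _
  have i3 : Integrable (fun x : 𝕋 => (1/2 : ℂ) * fourier (n-1) x) volume :=
    (my_integrable (fourier (n-1)).continuous _).const_mul _
  have i12 : Integrable (fun x : 𝕋 => (fourier n x : ℂ) + (1/2 : ℂ) * fourier (n+1) x) volume :=
    i1.add i2
  rw [integral_add i12 i3, integral_add i1 i2, integral_const_mul, integral_const_mul,
    integral_fourier, integral_fourier, integral_fourier]
  have e1 : (n + 1 = 0) ↔ (n = -1) := by omega
  have e2 : (n - 1 = 0) ↔ (n = 1) := by omega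
  simp only [e1, e2]
  split_ifs <;> norm_num

lemma F3_univ : F3 Set.univ = 1 := by
  rw [F3, withDensity_apply _ MeasurableSet.univ, setLIntegral_univ]
  have hint : Integrable (fun x : 𝕋 => 1 + cosC 1 x) volume :=
    my_integrable (continuous_const.add (cosC_cont 1)) _
  rw [← ofReal_integral_eq_lintegral_ofReal hint
    (Filter.Eventually.of_forall dens_nonneg)]
  have hc : (∫ x : 𝕋, cosC 1 x ∂volume) = 0 := by
    have : (∫ x : 𝕋, cosC 1 x ∂volume) = RCLike.re (∫ x : 𝕋, fourier 1 x ∂volume) := by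
      rw [← integral_re (my_integrable (fourier 1).continuous _)]
      simp [cosC_eq, RCLike.re_to_complex]
    rw [this, integral_fourier]; norm_num
  rw [integral_add (integrable_const 1) (my_integrable (cosC_cont 1) _), hc]
  simp

instance : IsFiniteMeasure F3 := ⟨by rw [F3_univ]; norm_num⟩

lemma part2 (k : ℤ) (hk : k ≠ 0) :
    (∫ x, sinC k x ∂F3) = 0 ∧ 0 ≤ ∫ x, cosC k x ∂F3 := by
  have hint : Integrable (fun x : 𝕋 => fourier k x) F3 :=
    my_integrable (fourier k).continuous _
  constructor
  · have : (∫ x, sinC k x ∂F3) = RCLike.im (∫ x, fourier k x ∂F3) := by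
      rw [← integral_im hint]; simp [sinC_eq, RCLike.im_to_complex]
    rw [this, coeff_F3]
    split_ifs <;> simp [RCLike.im_to_complex]
  · have : (∫ x, cosC k x ∂F3) = RCLike.re (∫ x, fourier k x ∂F3) := by
      rw [← integral_re hint]; simp [cosC_eq, RCLike.re_to_complex]
    rw [this, coeff_F3]
    split_ifs <;> norm_num [RCLike.re_to_complex]

lemma fourier_sub (k : ℤ) (x y : 𝕋) :
    (fourier k (x - y) : ℂ) = fourier k x * fourier (-k) y := by
  have h : (fourier k (x - y) : ℂ)
      = (AddCircle.toCircle (k • x) : ℂ) * (AddCircle.toCircle (-(k • y)) : ℂ) := by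
    rw [fourier_apply, smul_sub, sub_eq_add_neg, AddCircle.toCircle_add, Circle.coe_mul]
  rw [h, fourier_neg', ← fourier_apply, ← fourier_neg]

lemma coeff_autocorr (ρ : Measure 𝕋) [IsProbabilityMeasure ρ] (k : ℤ) :
    (∫ x, fourier k x ∂(autocorrC ρ))
      = (∫ x, fourier k x ∂ρ) * (∫ x, fourier (-k) x ∂ρ) := by
  rw [autocorrC, integral_map (by fun_prop) ((fourier k).continuous.aestronglyMeasurable)]
  have : ∀ p : 𝕋 × 𝕋, (fourier k (p.1 - p.2) : ℂ) = fourier k p.1 * fourier (-k) p.2 :=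
    fun p => fourier_sub k p.1 p.2
  simp only [this]
  exact integral_prod_mul (fun x => (fourier k x : ℂ)) (fun y => (fourier (-k) y : ℂ))

lemma fourier_one_mul_conj (x : 𝕋) :
    (fourier 1 x : ℂ) * conj (fourier 1 x) = 1 := by
  simp [Complex.mul_conj, Complex.normSq_eq_norm_sq, fourier_apply, Circle.norm_coe]

lemma part3 : ¬ ∃ ρ : Measure 𝕋, IsProbabilityMeasure ρ ∧ autocorrC ρ = F3 := by
  rintro ⟨ρ, hρ, heq⟩
  set a : ℤ → ℂ := fun m => ∫ x, fourier m x ∂ρ with ha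
  have haneg : ∀ m : ℤ, a (-m) = conj (a m) := by
    intro m
    rw [ha]
    simp only
    rw [← integral_conj]
    exact integral_congr_ae (Filter.Eventually.of_forall fun x => fourier_neg)
  have hco : ∀ k : ℤ, a k * conj (a k)
      = (if k = 0 then 1 else 0) + (if k = 1 then 1/2 else 0)
        + (if k = -1 then (1:ℂ)/2 else 0) := by
    intro k
    rw [← haneg k, ← coeff_autocorr ρ k, heq, coeff_F3]
  have h1 : a 1 * conj (a 1) = 1/2 := by rw [hco 1]; norm_num
  have hzero : ∀ k : ℤ, k ≠ 0 → k ≠ 1 → k ≠ -1 → a k = 0 := by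
    intro k hk0 hk1 hkm
    have h := hco k
    rw [if_neg hk0, if_neg hk1, if_neg hkm, Complex.mul_conj] at h
    norm_num at h
    exact h
  have h2 : a 2 = 0 := hzero 2 (by norm_num) (by norm_num) (by norm_num)
  have h3 : a 3 = 0 := hzero 3 (by norm_num) (by norm_num) (by norm_num)
  set α : ℂ := a 1 with hα
  set b : ℂ := conj (a 1) with hb
  set g : 𝕋 → ℂ := fun x => α - fourier 1 x + b * fourier 2 x with hg
  have hgcont : Continuous g :=
    (continuous_const.sub (fourier 1).continuous).add
      (continuous_const.mul (fourier 2).continuous)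
  -- pointwise facts about fourier on the circle
  have e2 : ∀ x : 𝕋, (fourier 2 x : ℂ) = fourier 1 x * fourier 1 x := by
    intro x; rw [show (2:ℤ) = 1 + 1 from rfl, fourier_add]
  have e3 : ∀ x : 𝕋, (fourier 3 x : ℂ) = fourier 1 x * fourier 1 x * fourier 1 x := by
    intro x; rw [show (3:ℤ) = 1 + 1 + 1 from rfl, fourier_add, fourier_add]
  have hc1 : ∀ x : 𝕋, conj (fourier 1 x : ℂ) = (fourier 1 x)⁻¹ := fun x =>
    eq_inv_of_mul_eq_one_left (by rw [mul_comm]; exact fourier_one_mul_conj x)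
  have hne : ∀ x : 𝕋, (fourier 1 x : ℂ) ≠ 0 := by
    intro x h
    have := fourier_one_mul_conj x
    rw [h] at this; simp at this
  have em1 : ∀ x : 𝕋, (fourier (-1) x : ℂ) = (fourier 1 x)⁻¹ := fun x => by
    rw [fourier_neg, hc1]
  have em2 : ∀ x : 𝕋, (fourier (-2) x : ℂ) = (fourier 1 x * fourier 1 x)⁻¹ := fun x => by
    rw [fourier_neg, e2, map_mul, hc1, mul_inv]
  have P1 : ∀ x : 𝕋, g x * conj (g x)
      = ((2*(α*b) + 1) + (-2*α) * fourier (-1) x) + (-2*b) * fourier 1 x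
        + (α*α) * fourier (-2) x + (b*b) * fourier 2 x := by
    intro x
    have hconjα : conj α = b := hb.symm
    have hconjb : conj b = α := by rw [hb, Complex.conj_conj]
    simp only [hg, map_add, map_sub, map_mul, hconjα, hconjb, hc1, em1, em2, e2]
    field_simp [hne x]
    ring
  have key : ∀ (c : ℂ) (m : ℤ), ∫ x, c * fourier m x ∂ρ = c * a m := fun c m => by
    rw [ha, integral_const_mul]
  have iint : ∀ (c : ℂ) (m : ℤ), Integrable (fun x : 𝕋 => c * fourier m x) ρ := fun c m =>
    (my_integrable (fourier m).continuous ρ).const_mul c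
  have hI : ∫ x, g x * conj (g x) ∂ρ = 0 := by
    simp only [P1]
    have i0 : Integrable (fun _ : 𝕋 => (2*(α*b) + 1 : ℂ)) ρ := integrable_const _
    have i01 : Integrable (fun x : 𝕋 => (2*(α*b)+1) + (-2*α) * fourier (-1) x) ρ :=
      i0.add (iint _ _)
    have i02 : Integrable
        (fun x : 𝕋 => ((2*(α*b)+1) + (-2*α) * fourier (-1) x) + (-2*b) * fourier 1 x) ρ :=
      i01.add (iint _ _)
    have i03 : Integrable (fun x : 𝕋 =>
        (((2*(α*b)+1) + (-2*α) * fourier (-1) x) + (-2*b) * fourier 1 x)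
          + (α*α) * fourier (-2) x) ρ := i02.add (iint _ _)
    rw [integral_add i03 (iint _ _), integral_add i02 (iint _ _), integral_add i01 (iint _ _),
      integral_add i0 (iint _ _), integral_const, key, key, key, key]
    have hm1 : a (-1) = b := by rw [haneg 1, ← hb]
    have hm2 : a (-2) = 0 := by rw [haneg 2, h2, map_zero]
    rw [hm1, hm2, h2]
    simp only [probReal_univ, one_smul]
    linear_combination (-2 : ℂ) * h1
  have hgz : g =ᵐ[ρ] 0 := by
    have hpt : ∀ x, g x * conj (g x) = ((Complex.normSq (g x) : ℝ) : ℂ) := fun x =>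
      Complex.mul_conj (g x)
    have hGint : Integrable (fun x : 𝕋 => g x * conj (g x)) ρ :=
      my_integrable (hgcont.mul (by exact continuous_star.comp hgcont)) ρ
    have hre := integral_re hGint
    rw [hI] at hre
    have hnn : ∫ x, Complex.normSq (g x) ∂ρ = 0 := by
      have hp2 : ∀ x : 𝕋, Complex.normSq (g x) = RCLike.re (g x * conj (g x)) := fun x => by
        rw [Complex.mul_conj]; simp [RCLike.re_to_complex]
      simp only [hp2]
      rw [hre]; simp
    have hintn : Integrable (fun x => Complex.normSq (g x)) ρ :=
      my_integrable (Complex.continuous_normSq.comp hgcont) ρ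
    have hz := (integral_eq_zero_iff_of_nonneg (fun x => Complex.normSq_nonneg _) hintn).1 hnn
    filter_upwards [hz] with x hx
    exact Complex.normSq_eq_zero.1 hx
  have hfin : (∫ x, fourier 1 x * g x ∂ρ) = 0 := by
    have hz2 : (fun x : 𝕋 => (fourier 1 x : ℂ) * g x) =ᵐ[ρ] (fun _ => 0) := by
      filter_upwards [hgz] with x hx
      simp only [Pi.zero_apply] at hx
      simp [hx]
    rw [integral_congr_ae hz2, integral_zero]
  have P2 : ∀ x : 𝕋, (fourier 1 x : ℂ) * g x
      = (α * fourier 1 x + (-1) * fourier 2 x) + b * fourier 3 x := by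
    intro x; simp only [hg, e2, e3]; ring
  have hαsq : (α * a 1 + (-1) * a 2) + b * a 3 = 0 := by
    have i12 : Integrable (fun x : 𝕋 => α * fourier 1 x + (-1) * fourier 2 x) ρ :=
      (iint α 1).add (iint (-1) 2)
    calc (α * a 1 + (-1) * a 2) + b * a 3
        = ∫ x, (α * fourier 1 x + (-1) * fourier 2 x) + b * fourier 3 x ∂ρ := by
          rw [integral_add i12 (iint b 3), integral_add (iint α 1) (iint (-1) 2),
            key, key, key]
      _ = ∫ x, fourier 1 x * g x ∂ρ :=
          integral_congr_ae (Filter.Eventually.of_forall fun x => (P2 x).symm)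
      _ = 0 := hfin
  rw [h2, h3, ← hα] at hαsq
  have hα0 : α = 0 := by
    have : α * α = 0 := by linear_combination hαsq
    exact mul_self_eq_zero.1 this
  rw [hα0] at h1
  norm_num at h1

/-- Remark 3.4: the measure with density `1 + cos(2πx)` has total mass one, vanishing sine
coefficients and nonnegative cosine coefficients (it is nonnegative, being a measure), yet it
is not the autocorrelation of any probability measure on the circle. -/
theorem stmt3 :
    F3 Set.univ = 1 ∧
      (∀ k : ℤ, k ≠ 0 → (∫ x, sinC k x ∂F3) = 0 ∧ 0 ≤ ∫ x, cosC k x ∂F3) ∧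
      ¬ ∃ ρ : Measure (AddCircle (1 : ℝ)), IsProbabilityMeasure ρ ∧ autocorrC ρ = F3 := by
  exact ⟨F3_univ, part2, part3⟩
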